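/- arXiv:1710.10150 — 2 statements merged into one kernel-verified Lean document; each statement's English description precedes it below -/
import Mathlib

section
/- Let (Ω, 𝔉, P) be a probability space, κ ≥ 1, let X_n : Ω → ℝ^κ be measurable for n ≥ 1, and let Δ_n : ℝ^κ → ℝ^κ be invertible linear maps. Suppose the family {Δ_n X_n : n ≥ 1} is uniformly tight, i.e. c(t) := sup_{n≥1} P(‖Δ_n X_n‖ > t) → 0 as t → ∞. Then C(s) := sup{ σ(Δ_n X_r) : n ≥ r ≥ 1 and ‖Δ_n ∘ Δ_r^{-1}‖ ≤ s } → 0 as s → 0+, where ‖·‖ denotes the operator norm on linear maps of ℝ^κ and σ(Z) := E[‖Z‖/(1 + ‖Z‖)]. -/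
open MeasureTheory Filter Topology
open scoped ENNReal

/-- claim (♠) of the Infinite Divisibility Lemma: uniform tightness of
`{Δ_n X_n}` implies `C(s) := sup{σ(Δ_n X_r) : n ≥ r ≥ 1, ‖Δ_n ∘ Δ_r⁻¹‖ ≤ s} → 0` as
`s → 0+`, where `σ(Z) = E[‖Z‖/(1+‖Z‖)]`. -/
theorem stmt3 {Ω : Type*} [MeasurableSpace Ω] (P : Measure Ω) [IsProbabilityMeasure P]
    (κ : ℕ) (hκ : 1 ≤ κ)
    (X : ℕ → Ω → EuclideanSpace ℝ (Fin κ)) (hX : ∀ n, Measurable (X n))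
    (Δ : ℕ → (EuclideanSpace ℝ (Fin κ) ≃L[ℝ] EuclideanSpace ℝ (Fin κ)))
    (htight : Tendsto (fun t : ℝ => ⨆ (n : ℕ) (_ : 1 ≤ n), P {ω | t < ‖Δ n (X n ω)‖})
      atTop (𝓝 0)) :
    Tendsto (fun s : ℝ => sSup {v : ℝ | ∃ n r : ℕ, 1 ≤ r ∧ r ≤ n ∧
        ‖((Δ n : EuclideanSpace ℝ (Fin κ) →L[ℝ] EuclideanSpace ℝ (Fin κ)).comp
            ((Δ r).symm : EuclideanSpace ℝ (Fin κ) →L[ℝ] EuclideanSpace ℝ (Fin κ)))‖ ≤ s ∧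
        v = ∫ ω, ‖Δ n (X r ω)‖ / (1 + ‖Δ n (X r ω)‖) ∂P})
      (𝓝[>] 0) (𝓝 0) := by
  rw [Metric.tendsto_nhds]
  intro ε hε
  have hε4 : (0:ℝ) < ε / 4 := by linarith
  have h1 : ∀ᶠ t : ℝ in atTop,
      (⨆ (n : ℕ) (_ : 1 ≤ n), P {ω | t < ‖Δ n (X n ω)‖}) < ENNReal.ofReal (ε/4) :=
    htight.eventually (gt_mem_nhds (by simpa using ENNReal.ofReal_pos.2 hε4))
  obtain ⟨t, ht, ht0⟩ := (h1.and (eventually_ge_atTop (0:ℝ))).exists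
  set δ : ℝ := ε / (4 * (t + 1)) with hδdef
  have hδ : 0 < δ := by positivity
  have hIoc : Set.Ioc (0:ℝ) δ ∈ 𝓝[>] (0:ℝ) := Ioc_mem_nhdsGT_of_mem ⟨le_refl 0, hδ⟩
  filter_upwards [hIoc] with s hs
  -- every element of the set is in [0, ε/2]
  have key : ∀ v ∈ {v : ℝ | ∃ n r : ℕ, 1 ≤ r ∧ r ≤ n ∧
        ‖((Δ n : EuclideanSpace ℝ (Fin κ) →L[ℝ] EuclideanSpace ℝ (Fin κ)).comp
            ((Δ r).symm : EuclideanSpace ℝ (Fin κ) →L[ℝ] EuclideanSpace ℝ (Fin κ)))‖ ≤ s ∧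
        v = ∫ ω, ‖Δ n (X r ω)‖ / (1 + ‖Δ n (X r ω)‖) ∂P}, 0 ≤ v ∧ v ≤ ε / 2 := by
    rintro v ⟨n, r, hr1, hrn, hcomp, rfl⟩
    have hmn : Measurable fun ω => ‖Δ n (X r ω)‖ :=
      ((Δ n).continuous.measurable.comp (hX r)).norm
    have hmr : Measurable fun ω => ‖Δ r (X r ω)‖ :=
      ((Δ r).continuous.measurable.comp (hX r)).norm
    have hpos : ∀ ω, (0:ℝ) < 1 + ‖Δ n (X r ω)‖ := fun ω => by positivity
    have hg : Measurable fun ω => ‖Δ n (X r ω)‖ / (1 + ‖Δ n (X r ω)‖) :=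
      hmn.div (measurable_const.add hmn)
    have hgnn : ∀ ω, 0 ≤ ‖Δ n (X r ω)‖ / (1 + ‖Δ n (X r ω)‖) := fun ω => by positivity
    have hg1 : ∀ ω, ‖Δ n (X r ω)‖ / (1 + ‖Δ n (X r ω)‖) ≤ 1 := fun ω =>
      (div_le_one (hpos ω)).2 (by linarith [norm_nonneg (Δ n (X r ω))])
    have hint : Integrable (fun ω => ‖Δ n (X r ω)‖ / (1 + ‖Δ n (X r ω)‖)) P := by
      refine (integrable_const (1:ℝ)).mono' hg.aestronglyMeasurable
        (Filter.Eventually.of_forall fun ω => ?_)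
      rw [Real.norm_eq_abs, abs_of_nonneg (hgnn ω)]
      exact hg1 ω
    constructor
    · exact integral_nonneg hgnn
    -- measure bound
    set A : Set Ω := {ω | t < ‖Δ r (X r ω)‖} with hA
    have hAm : MeasurableSet A := measurableSet_lt measurable_const hmr
    have hPA : (P A).toReal ≤ ε / 4 := by
      have hle : P A ≤ ⨆ (n : ℕ) (_ : 1 ≤ n), P {ω | t < ‖Δ n (X n ω)‖} :=
        le_iSup₂ (f := fun n (_ : 1 ≤ n) => P {ω | t < ‖Δ n (X n ω)‖}) r hr1
      exact ENNReal.toReal_le_of_le_ofReal (le_of_lt hε4) (hle.trans ht.le)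
    have hs0 : 0 ≤ s := hs.1.le
    have hptw : ∀ ω, ‖Δ n (X r ω)‖ / (1 + ‖Δ n (X r ω)‖) ≤
        s * t + A.indicator (fun _ => (1:ℝ)) ω := by
      intro ω
      by_cases h : ω ∈ A
      · rw [Set.indicator_of_mem h]
        have := hg1 ω
        nlinarith [mul_nonneg hs0 ht0]
      · rw [Set.indicator_of_notMem h, add_zero]
        have hAω : ‖Δ r (X r ω)‖ ≤ t := not_lt.1 h
        have hkey : ‖Δ n (X r ω)‖ ≤ s * t := by
          have h2 := ((Δ n : EuclideanSpace ℝ (Fin κ) →L[ℝ] EuclideanSpace ℝ (Fin κ)).comp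
            ((Δ r).symm : EuclideanSpace ℝ (Fin κ) →L[ℝ] EuclideanSpace ℝ (Fin κ))).le_opNorm
            (Δ r (X r ω))
          simp only [ContinuousLinearMap.comp_apply, ContinuousLinearEquiv.coe_coe,
            ContinuousLinearEquiv.symm_apply_apply] at h2
          calc ‖Δ n (X r ω)‖ ≤ _ := h2
            _ ≤ s * t := mul_le_mul hcomp hAω (norm_nonneg _) hs0
        calc ‖Δ n (X r ω)‖ / (1 + ‖Δ n (X r ω)‖) ≤ ‖Δ n (X r ω)‖ :=
              div_le_self (norm_nonneg _) (by linarith [norm_nonneg (Δ n (X r ω))])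
          _ ≤ s * t := hkey
    have hintU : Integrable (fun ω => s * t + A.indicator (fun _ => (1:ℝ)) ω) P :=
      (integrable_const _).add ((integrable_const (1:ℝ)).indicator hAm)
    have hIle : (∫ ω, ‖Δ n (X r ω)‖ / (1 + ‖Δ n (X r ω)‖) ∂P) ≤
        ∫ ω, s * t + A.indicator (fun _ => (1:ℝ)) ω ∂P :=
      integral_mono hint hintU hptw
    have hIR : (∫ ω, s * t + A.indicator (fun _ => (1:ℝ)) ω ∂P) = s * t + (P A).toReal := by
      rw [integral_add (integrable_const _) ((integrable_const (1:ℝ)).indicator hAm),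
        integral_const, integral_indicator_const (1:ℝ) hAm]
      simp
      rfl
    have hst : s * t ≤ ε / 4 := by
      have hsδ : s ≤ δ := hs.2
      have : s * t ≤ δ * t := mul_le_mul_of_nonneg_right hsδ ht0
      calc s * t ≤ δ * t := this
        _ = ε * t / (4 * (t + 1)) := by rw [hδdef]; ring
        _ ≤ ε / 4 := by
            rw [div_le_div_iff₀ (by positivity) (by norm_num)]
            nlinarith
    calc (∫ ω, ‖Δ n (X r ω)‖ / (1 + ‖Δ n (X r ω)‖) ∂P) ≤ s * t + (P A).toReal := by
          rw [← hIR]; exact hIle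
      _ ≤ ε / 4 + ε / 4 := add_le_add hst hPA
      _ = ε / 2 := by ring
  have hub : sSup _ ≤ ε / 2 := Real.sSup_le (fun v hv => (key v hv).2) (by linarith)
  have hlb : (0:ℝ) ≤ sSup _ := Real.sSup_nonneg (fun v hv => (key v hv).1)
  rw [Real.dist_eq, sub_zero, abs_of_nonneg hlb]
  linarith [hub]
end

section
/- Let X be a set, T : X → X, r : X → ℝ with r(x) ≥ c > 0 for all x, let Y := {(x,y) ∈ X × ℝ : 0 ≤ y < r(x)}, let Φ_t be the suspension semiflow Φ_t(x,y) := (T^n x, y + t − r_n(x)) with n := N(t)(x,y) := #{m ≥ 1 : r_m(x) ≤ y + t}, and let κ ≥ 1. Let f : Y → ℝ^κ be such that for each x ∈ X the map s ↦ f(x,s) is integrable on [0, r(x)). Define φ(x) := ∫_0^{r(x)} f(x,s) ds, ℰ(x,u) := ∫_0^u f(x,s) ds, the smooth cocycle F(t,(x,u)) := ∫_0^t f(Φ_s(x,u)) ds, and the jump cocycle J(t,(x,u)) := ∑_{k=0}^{N(t)(x,u)−1} φ(T^k x). Then for all t ≥ 0 and (x,u) ∈ Y: F(t,(x,u)) =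 J(t,(x,u)) − ℰ(x,u) + ℰ(Φ_t(x,u)). -/
open Filter Topology MeasureTheory

/-- Birkhoff sum `r_n(x) = ∑_{k=0}^{n-1} r(T^k x)` of the roof function. -/
def roofSum {X : Type*} (T : X → X) (r : X → ℝ) (n : ℕ) (x : X) : ℝ :=
  ∑ k ∈ Finset.range n, r (T^[k] x)

/-- The renewal cocycle `N(t)(x,y) = #{n ≥ 1 : r_n(x) ≤ y + t}`. -/
noncomputable def renewalN {X : Type*} (T : X → X) (r : X → ℝ) (t : ℝ) (p : X × ℝ) : ℕ :=
  Set.ncard {n : ℕ | 1 ≤ n ∧ roofSum T r n p.1 ≤ p.2 + t}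

/-- The suspension semiflow `Φ_t(x,y) = (T^n x, y + t − r_n(x))` with `n = N(t)(x,y)`. -/
noncomputable def susFlow {X : Type*} (T : X → X) (r : X → ℝ) (t : ℝ) (p : X × ℝ) :
    X × ℝ :=
  (T^[renewalN T r t p] p.1, p.2 + t - roofSum T r (renewalN T r t p) p.1)

section Aux

variable {X : Type*} (T : X → X) (r : X → ℝ) {c : ℝ}

lemma roofSum_zero (x : X) : roofSum T r 0 x = 0 := by simp [roofSum]

lemma roofSum_one (x : X) : roofSum T r 1 x = r x := by simp [roofSum]

lemma roofSum_comp (n : ℕ) (x : X) :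
    roofSum T r (n + 1) x = r x + roofSum T r n (T x) := by
  rw [roofSum, Finset.sum_range_succ', add_comm]
  simp [roofSum, Function.iterate_succ_apply]

lemma roofSum_mono (hc : 0 < c) (hr : ∀ x, c ≤ r x) {m n : ℕ} (h : m ≤ n) (x : X) :
    roofSum T r m x ≤ roofSum T r n x := by
  unfold roofSum
  exact Finset.sum_le_sum_of_subset_of_nonneg (Finset.range_subset_range.2 h)
    (fun i _ _ => le_trans hc.le (hr _))

lemma mul_le_roofSum (hr : ∀ x, c ≤ r x) (n : ℕ) (x : X) :
    (n : ℝ) * c ≤ roofSum T r n x := by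
  unfold roofSum
  calc (n : ℝ) * c = ∑ _k ∈ Finset.range n, c := by simp [mul_comm]
  _ ≤ _ := Finset.sum_le_sum fun i _ => hr _

lemma renewalN_eq (hc : 0 < c) (hr : ∀ x, c ≤ r x) {n : ℕ} {x : X} {u t : ℝ}
    (h1 : roofSum T r n x ≤ u + t) (h2 : u + t < roofSum T r (n + 1) x) :
    renewalN T r t (x, u) = n := by
  have hset : {m : ℕ | 1 ≤ m ∧ roofSum T r m x ≤ u + t} = ↑(Finset.Icc 1 n) := by
    ext m
    simp only [Set.mem_setOf_eq, Finset.coe_Icc, Set.mem_Icc]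
    constructor
    · rintro ⟨h1m, h2m⟩
      refine ⟨h1m, ?_⟩
      by_contra hmn
      push_neg at hmn
      exact absurd (le_trans (roofSum_mono T r hc hr hmn x) h2m) (not_le.2 h2)
    · rintro ⟨h1m, h2m⟩
      exact ⟨h1m, le_trans (roofSum_mono T r hc hr h2m x) h1⟩
  rw [renewalN]
  simp only [hset, Set.ncard_coe_finset, Nat.card_Icc]
  omega

lemma exists_index (hc : 0 < c) (hr : ∀ x, c ≤ r x) (x : X) {v : ℝ} (hv : 0 ≤ v) :
    ∃ n, roofSum T r n x ≤ v ∧ v < roofSum T r (n + 1) x := by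
  have hP : ∃ n : ℕ, v < roofSum T r (n + 1) x := by
    obtain ⟨n, hn⟩ := exists_nat_gt (v / c)
    refine ⟨n, lt_of_lt_of_le ?_ (le_trans (mul_le_roofSum T r hr n x)
      (roofSum_mono T r hc hr (Nat.le_succ n) x))⟩
    rwa [div_lt_iff₀ hc] at hn
  classical
  refine ⟨Nat.find hP, ?_, Nat.find_spec hP⟩
  rcases Nat.eq_zero_or_eq_succ_pred (Nat.find hP) with h0 | hsucc
  · rw [h0, roofSum_zero]; exact hv
  · have := Nat.find_min hP (m := Nat.find hP - 1) (by omega)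
    push_neg at this
    have : roofSum T r (Nat.find hP - 1 + 1) x ≤ v := this
    rwa [(by omega : Nat.find hP - 1 + 1 = Nat.find hP)] at this

lemma susFlow_shift (hc : 0 < c) (hr : ∀ x, c ≤ r x) {x : X} {u s : ℝ}
    (hu : 0 ≤ u) (hux : u < r x) (hs : 0 ≤ s) :
    renewalN T r (s + (r x - u)) (x, u) = renewalN T r s (T x, 0) + 1 ∧
    susFlow T r (s + (r x - u)) (x, u) = susFlow T r s (T x, 0) := by
  obtain ⟨n, h1, h2⟩ := exists_index T r hc hr (T x) hs
  have hN' : renewalN T r s (T x, 0) = n :=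
    renewalN_eq T r hc hr (by simpa using h1) (by simpa using h2)
  have e1 : roofSum T r (n + 1) x ≤ u + (s + (r x - u)) := by
    rw [roofSum_comp]; linarith
  have e2 : u + (s + (r x - u)) < roofSum T r (n + 1 + 1) x := by
    rw [roofSum_comp]; linarith
  have hN : renewalN T r (s + (r x - u)) (x, u) = n + 1 := renewalN_eq T r hc hr e1 e2
  refine ⟨by rw [hN, hN'], ?_⟩
  rw [susFlow, susFlow, hN, hN']
  refine Prod.ext (Function.iterate_succ_apply T n x) ?_
  simp only
  rw [roofSum_comp]
  ring

lemma susFlow_small (hc : 0 < c) (hr : ∀ x, c ≤ r x) {x : X} {u s : ℝ}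
    (hu : 0 ≤ u) (hs : 0 ≤ s) (h : u + s < r x) :
    susFlow T r s (x, u) = (x, u + s) := by
  have hN : renewalN T r s (x, u) = 0 :=
    renewalN_eq T r hc hr (by rw [roofSum_zero]; linarith) (by rwa [zero_add, roofSum_one])
  rw [susFlow, hN]
  simp [roofSum_zero]

lemma renewalN_pos_iff (hc : 0 < c) (hr : ∀ x, c ≤ r x) {x : X} {u t : ℝ}
    (hu : 0 ≤ u) (ht : 0 ≤ u + t) :
    renewalN T r t (x, u) = 0 ↔ u + t < r x := by
  constructor
  · intro h
    obtain ⟨m, h1, h2⟩ := exists_index T r hc hr x ht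
    have hm := renewalN_eq T r hc hr h1 h2
    rw [h] at hm
    rw [← hm, roofSum_one] at h2
    exact h2
  · intro h
    exact renewalN_eq T r hc hr (by rw [roofSum_zero]; linarith) (by rwa [zero_add, roofSum_one])

end Aux

/-- the smooth cocycle `F(t,(x,u)) = ∫_0^t f(Φ_s(x,u)) ds` is
cohomologous to the jump cocycle `J(t,(x,u)) = ∑_{k<N(t)(x,u)} φ(T^k x)`,
`φ(x) = ∫_0^{r(x)} f(x,s) ds`, via the transfer function `ℰ(x,u) = ∫_0^u f(x,s) ds`:
`F(t,p) = J(t,p) − ℰ(p) + ℰ(Φ_t p)` on `Y = {(x,u) : 0 ≤ u < r(x)}`. -/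
theorem stmt15 {X : Type*} (T : X → X) (r : X → ℝ) (c : ℝ) (hc : 0 < c)
    (hr : ∀ x, c ≤ r x) (κ : ℕ) (hκ : 1 ≤ κ)
    (f : X × ℝ → Fin κ → ℝ)
    (hf : ∀ x : X, IntegrableOn (fun s => f (x, s)) (Set.Ico 0 (r x))) :
    ∀ t : ℝ, 0 ≤ t → ∀ p : X × ℝ, 0 ≤ p.2 → p.2 < r p.1 →
      (∫ s in (0 : ℝ)..t, f (susFlow T r s p)) =
        (∑ k ∈ Finset.range (renewalN T r t p),
            ∫ s in (0 : ℝ)..(r (T^[k] p.1)), f (T^[k] p.1, s))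
          - (∫ s in (0 : ℝ)..p.2, f (p.1, s))
          + ∫ s in (0 : ℝ)..(susFlow T r t p).2, f ((susFlow T r t p).1, s) := by
  -- integrability of vertical slices
  have intInt : ∀ (x : X) {a b : ℝ}, 0 ≤ a → b ≤ r x → a ≤ b →
      IntervalIntegrable (fun s => f (x, s)) volume a b := by
    intro x a b ha hb hab
    rw [intervalIntegrable_iff_integrableOn_Ioc_of_le hab,
      integrableOn_Ioc_iff_integrableOn_Ioo]
    exact (hf x).mono_set fun y hy => ⟨le_trans ha hy.1.le, lt_of_lt_of_le hy.2 hb⟩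
  suffices key : ∀ n : ℕ, ∀ t : ℝ, 0 ≤ t → ∀ x : X, ∀ u : ℝ, 0 ≤ u → u < r x →
      renewalN T r t (x, u) = n →
      IntervalIntegrable (fun s => f (susFlow T r s (x, u))) volume 0 t ∧
      (∫ s in (0 : ℝ)..t, f (susFlow T r s (x, u))) =
        (∑ k ∈ Finset.range (renewalN T r t (x, u)),
            ∫ s in (0 : ℝ)..(r (T^[k] x)), f (T^[k] x, s))
          - (∫ s in (0 : ℝ)..u, f (x, s))
          + ∫ s in (0 : ℝ)..(susFlow T r t (x, u)).2, f ((susFlow T r t (x, u)).1, s) by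
    rintro t ht ⟨x, u⟩ hp1 hp2
    exact (key _ t ht x u hp1 hp2 rfl).2
  intro n
  induction n with
  | zero =>
    intro t ht x u hu hux hN
    have hut : u + t < r x := (renewalN_pos_iff T r hc hr hu (by linarith)).1 hN
    have heq : Set.EqOn (fun s => f (susFlow T r s (x, u))) (fun s => f (x, u + s))
        (Set.uIcc 0 t) := by
      intro s hs
      rw [Set.uIcc_of_le ht] at hs
      exact congrArg f (susFlow_small T r hc hr hu hs.1 (by linarith [hs.2]))
    have base : IntervalIntegrable (fun s => f (x, s)) volume u (u + t) :=
      intInt x hu (by linarith) (by linarith)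
    have hint2 : IntervalIntegrable (fun s => f (x, u + s)) volume 0 t := by
      have h := base.comp_add_left u
      rwa [sub_self, add_sub_cancel_left] at h
    have hae : (fun s => f (x, u + s)) =ᵐ[volume.restrict (Set.uIoc (0:ℝ) t)]
        (fun s => f (susFlow T r s (x, u))) := by
      filter_upwards [ae_restrict_mem measurableSet_uIoc] with s hs
      exact (heq (Set.uIoc_subset_uIcc hs)).symm
    refine ⟨hint2.congr_ae hae, ?_⟩
    rw [intervalIntegral.integral_congr heq]
    have hcv : (∫ s in (0:ℝ)..t, f (x, u + s)) = ∫ y in (u + 0)..(u + t), f (x, y) :=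
      intervalIntegral.integral_comp_add_left (fun y => f (x, y)) u
    rw [hcv, (by ring : u + (0:ℝ) = u), hN, susFlow_small T r hc hr hu ht hut]
    simp only [Finset.range_zero, Finset.sum_empty, add_zero]
    have adj : (∫ s in (0:ℝ)..u, f (x, s)) + ∫ s in u..(u + t), f (x, s)
        = ∫ s in (0:ℝ)..(u + t), f (x, s) :=
      intervalIntegral.integral_add_adjacent_intervals
        (intInt x le_rfl (by linarith) hu) base
    rw [← adj]
    abel
  | succ n ih =>
    intro t ht x u hu hux hN
    have hrxut : r x ≤ u + t := by
      by_contra h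
      push_neg at h
      have := (renewalN_pos_iff T r hc hr hu (by linarith)).2 h
      omega
    have ht₀ : 0 < r x - u := by linarith
    have ht₀t : r x - u ≤ t := by linarith
    have ht'' : t - (r x - u) + (r x - u) = t := by ring
    obtain ⟨hsh1, hsh2⟩ := susFlow_shift T r hc hr hu hux (s := t - (r x - u)) (by linarith)
    rw [ht''] at hsh1 hsh2
    have hN' : renewalN T r (t - (r x - u)) (T x, 0) = n := by omega
    obtain ⟨ihInt, ihEq⟩ := ih (t - (r x - u)) (by linarith) (T x) 0 le_rfl
      (lt_of_lt_of_le hc (hr _)) hN'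
    -- the two pieces
    have eq2 : Set.EqOn (fun s => f (susFlow T r s (x, u)))
        (fun s => f (susFlow T r (s - (r x - u)) (T x, 0))) (Set.uIcc (r x - u) t) := by
      intro s hs
      rw [Set.uIcc_of_le ht₀t] at hs
      have h2 := (susFlow_shift T r hc hr hu hux (s := s - (r x - u)) (by linarith [hs.1])).2
      rw [(by ring : s - (r x - u) + (r x - u) = s)] at h2
      exact congrArg f h2
    have intB : IntervalIntegrable (fun s => f (susFlow T r (s - (r x - u)) (T x, 0)))
        volume (r x - u) t := by
      have h := ihInt.comp_sub_right (r x - u)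
      rwa [zero_add, sub_add_cancel] at h
    have intA2 : IntervalIntegrable (fun s => f (susFlow T r s (x, u))) volume (r x - u) t := by
      refine intB.congr_ae ?_
      filter_upwards [ae_restrict_mem measurableSet_uIoc] with s hs
      exact (eq2 (Set.uIoc_subset_uIcc hs)).symm
    have base1 : IntervalIntegrable (fun s => f (x, s)) volume u (r x) :=
      intInt x hu le_rfl hux.le
    have int1base : IntervalIntegrable (fun s => f (x, u + s)) volume 0 (r x - u) := by
      have h := base1.comp_add_left u
      rwa [sub_self] at h
    have hae1 : (fun s => f (x, u + s)) =ᵐ[volume.restrict (Set.uIoc (0:ℝ) (r x - u))]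
        (fun s => f (susFlow T r s (x, u))) := by
      have h0 : ∀ᵐ s : ℝ, s ≠ r x - u := by
        rw [ae_iff]
        simp only [ne_eq, not_not, Set.setOf_eq_eq_singleton]
        exact Real.volume_singleton
      filter_upwards [ae_restrict_mem measurableSet_uIoc, ae_restrict_of_ae h0] with s hs hs'
      rw [Set.uIoc_of_le ht₀.le] at hs
      have hlt : u + s < r x := by
        have := lt_of_le_of_ne hs.2 hs'
        linarith
      exact (congrArg f (susFlow_small T r hc hr hu hs.1.le hlt)).symm
    have intA1 : IntervalIntegrable (fun s => f (susFlow T r s (x, u))) volume 0 (r x - u) :=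
      int1base.congr_ae hae1
    refine ⟨intA1.trans intA2, ?_⟩
    have split : (∫ s in (0:ℝ)..(r x - u), f (susFlow T r s (x, u)))
        + ∫ s in (r x - u)..t, f (susFlow T r s (x, u))
        = ∫ s in (0:ℝ)..t, f (susFlow T r s (x, u)) :=
      intervalIntegral.integral_add_adjacent_intervals intA1 intA2
    -- first piece
    have E2 : (∫ s in (0:ℝ)..(r x - u), f (susFlow T r s (x, u)))
        = ∫ y in u..(r x), f (x, y) := by
      have h' : ∀ᵐ s ∂(volume : Measure ℝ), s ∈ Set.uIoc (0:ℝ) (r x - u) →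
          f (susFlow T r s (x, u)) = f (x, u + s) :=
        (ae_restrict_iff' measurableSet_uIoc).1 hae1.symm
      rw [intervalIntegral.integral_congr_ae h']
      have hcv : (∫ s in (0:ℝ)..(r x - u), f (x, u + s))
          = ∫ y in (u + 0)..(u + (r x - u)), f (x, y) :=
        intervalIntegral.integral_comp_add_left (fun y => f (x, y)) u
      rw [hcv, (by ring : u + (0:ℝ) = u), (by ring : u + (r x - u) = r x)]
    -- second piece
    have E3 : (∫ s in (r x - u)..t, f (susFlow T r s (x, u)))
        = ∫ σ in (0:ℝ)..(t - (r x - u)), f (susFlow T r σ (T x, 0)) := by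
      rw [intervalIntegral.integral_congr eq2]
      have hcv : (∫ s in (r x - u)..t, f (susFlow T r (s - (r x - u)) (T x, 0)))
          = ∫ σ in (r x - u) - (r x - u)..t - (r x - u), f (susFlow T r σ (T x, 0)) :=
        intervalIntegral.integral_comp_sub_right (fun σ => f (susFlow T r σ (T x, 0))) _
      rw [hcv, sub_self]
    rw [← split, E2, E3, ihEq, hN', hsh2, hN]
    rw [intervalIntegral.integral_same]
    rw [Finset.sum_range_succ']
    simp only [Function.iterate_succ_apply, Function.iterate_zero_apply]
    have adj2 : (∫ s in (0:ℝ)..u, f (x, s)) + ∫ s in u..(r x), f (x, s)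
        = ∫ s in (0:ℝ)..(r x), f (x, s) :=
      intervalIntegral.integral_add_adjacent_intervals
        (intInt x le_rfl (by linarith) hu) base1
    rw [← adj2]
    abel
end
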